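/- Let m be a positive integer and x a real number. Define polynomials Q_n ∈ ℝ[z] by Q_0 = 1, Q_1 = z − (1+x), and Q_n = (z − (1 + (2n−1)x + (n−1)m))·Q_{n−1} − (n−1)^2·x·(x+m)·Q_{n−2} for n ≥ 2. Let L : ℝ[z] → ℝ be the unique linear functional with L(z^n) = 𝓕_m(n,x) for all n ≥ 0. Then L(Q_i · Q_j) = 0 whenever i ≠ j; that is, the Tanny-Dowling polynomials 𝓕_m(n,x) are the moments of the orthogonal polynomial family (Q_n). -/

import Mathlib

open Polynomial Finset

/-- Whitney numbers of the second kind: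
`W_m(n,k) = (1/(m^k k!)) ∑_{i=0}^k (−1)^{k−i} C(k,i) (mi+1)^n`. -/
noncomputable def whitney2 (m n k : ℕ) : ℝ :=
  (1 / ((m : ℝ) ^ k * k.factorial)) *
    ∑ i ∈ Finset.range (k + 1), (-1 : ℝ) ^ (k - i) * (k.choose i) * ((m : ℝ) * i + 1) ^ n

/-- Tanny–Dowling polynomials `𝓕_m(n,x) = ∑_{k=0}^n k!·W_m(n,k)·x^k`. -/
noncomputable def tannyDowling (m n : ℕ) (x : ℝ) : ℝ :=
  ∑ k ∈ Finset.range (n + 1), (k.factorial : ℝ) * whitney2 m n k * x ^ k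

/-- `Q_0 = 1`, `Q_1 = z − (1+x)`,
`Q_n = (z − (1 + (2n−1)x + (n−1)m))·Q_{n−1} − (n−1)²·x·(x+m)·Q_{n−2}` for `n ≥ 2`. -/
noncomputable def tannyDowlingOP (m : ℕ) (x : ℝ) : ℕ → Polynomial ℝ
  | 0 => 1
  | 1 => Polynomial.X - Polynomial.C (1 + x)
  | (n + 2) =>
      (Polynomial.X - Polynomial.C (1 + (2 * ((n : ℝ) + 2) - 1) * x + ((n : ℝ) + 1) * m)) *
          tannyDowlingOP m x (n + 1) -
        Polynomial.C (((n : ℝ) + 1) ^ 2 * x * (x + m)) * tannyDowlingOP m x n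

open Polynomial Finset

noncomputable def pfall (m : ℕ) (l : ℕ) : Polynomial ℝ :=
  ∏ i ∈ Finset.range l, (Polynomial.X - Polynomial.C ((m : ℝ) * i + 1))

lemma pfall_zero (m : ℕ) : pfall m 0 = 1 := by simp [pfall]

lemma pfall_succ (m l : ℕ) :
    pfall m (l + 1) = pfall m l * (X - C ((m : ℝ) * l + 1)) :=
  Finset.prod_range_succ _ _

lemma pfall_monic (m l : ℕ) : (pfall m l).Monic :=
  monic_prod_of_monic _ _ fun _ _ => monic_X_sub_C _

lemma pfall_natDegree (m l : ℕ) : (pfall m l).natDegree = l := by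
  rw [pfall, natDegree_prod (h := fun i _ => X_sub_C_ne_zero _)]
  simp only [natDegree_X_sub_C, Finset.sum_const, Finset.card_range, smul_eq_mul, mul_one]

lemma pfall_eval (m j k : ℕ) :
    (pfall m k).eval ((m : ℝ) * j + 1) =
      (m : ℝ) ^ k * k.factorial * (j.choose k) := by
  induction k with
  | zero => simp [pfall_zero]
  | succ k ih =>
      rw [pfall_succ, eval_mul, ih]
      have h : ((j.choose (k+1) : ℝ)) * (k+1) = (j.choose k) * ((j : ℝ) - k) := by
        rcases le_or_gt k j with h | h
        · have := Nat.choose_succ_right_eq j k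
          have hcast : ((j.choose (k+1) * (k+1) : ℕ) : ℝ) = ((j.choose k * (j - k) : ℕ) : ℝ) := by
            rw [this]
          push_cast [Nat.cast_sub h] at hcast
          push_cast
          linarith [hcast]
        · rw [Nat.choose_eq_zero_of_lt h, Nat.choose_eq_zero_of_lt (by omega)]
          push_cast
          ring
      simp only [eval_sub, eval_X, eval_C]
      have : (m:ℝ) * j + 1 - ((m:ℝ) * k + 1) = (m:ℝ) * ((j:ℝ) - (k:ℝ)) := by ring
      rw [this]
      push_cast [Nat.factorial_succ]
      linear_combination (-(m:ℝ)^(k+1) * (k.factorial : ℝ)) * h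

lemma alt_sum_choose_real (n : ℕ) :
    ∑ t ∈ range (n + 1), (-1 : ℝ) ^ t * (n.choose t) = if n = 0 then 1 else 0 := by
  have h := Int.alternating_sum_range_choose (n := n)
  have h2 : ((∑ t ∈ range (n + 1), ((-1) ^ t * n.choose t : ℤ) : ℤ) : ℝ)
      = ((if n = 0 then 1 else 0 : ℤ) : ℝ) := by rw [h]
  push_cast at h2
  convert h2 using 2 <;> simp


lemma delta_sum (n j i : ℕ) (hj : j ≤ n) :
    ∑ k ∈ range (n + 1), (-1 : ℝ) ^ (k - i) * (j.choose k) * (k.choose i)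
      = if i = j then 1 else 0 := by
  rcases lt_or_ge j i with hij | hij
  · rw [if_neg (by omega)]
    apply Finset.sum_eq_zero
    intro k _
    rcases lt_or_ge k i with hk | hk
    · rw [Nat.choose_eq_zero_of_lt hk]; push_cast; ring
    · rw [Nat.choose_eq_zero_of_lt (lt_of_lt_of_le hij hk)]; push_cast; ring
  · -- i ≤ j
    have h1 : ∑ k ∈ range (n + 1), (-1 : ℝ) ^ (k - i) * (j.choose k) * (k.choose i)
        = ∑ k ∈ range (j + 1), (-1 : ℝ) ^ (k - i) * (j.choose k) * (k.choose i) := by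
      refine (Finset.sum_subset (Finset.range_subset_range.mpr (by omega)) ?_).symm
      intro k _ hk
      have : j < k := by simpa using hk
      rw [Nat.choose_eq_zero_of_lt this]; push_cast; ring
    have h2 : ∑ k ∈ Finset.Ico 0 i, (-1 : ℝ) ^ (k - i) * (j.choose k) * (k.choose i) = 0 := by
      apply Finset.sum_eq_zero
      intro k hk
      have : k < i := by simpa using hk
      rw [Nat.choose_eq_zero_of_lt this]; push_cast; ring
    have h3 : ∑ k ∈ Finset.Ico 0 i, ((-1 : ℝ) ^ (k - i) * (j.choose k) * (k.choose i))
        + ∑ k ∈ Finset.Ico i (j+1), ((-1 : ℝ) ^ (k - i) * (j.choose k) * (k.choose i))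
        = ∑ k ∈ Finset.Ico 0 (j+1), ((-1 : ℝ) ^ (k - i) * (j.choose k) * (k.choose i)) :=
      Finset.sum_Ico_consecutive _ (by omega) (by omega)
    have h4 : ∑ k ∈ Finset.Ico i (j+1), ((-1 : ℝ) ^ (k - i) * (j.choose k) * (k.choose i))
        = ∑ t ∈ range (j + 1 - i), ((-1 : ℝ) ^ t * (j.choose i) * ((j-i).choose t)) := by
      rw [Finset.sum_Ico_eq_sum_range]
      apply Finset.sum_congr rfl
      intro t ht
      have ht' : t ≤ j - i := by
        have := Finset.mem_range.mp ht; omega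
      have hc : j.choose (i + t) * (i + t).choose i = j.choose i * (j - i).choose t := by
        have := Nat.choose_mul (n := j) (k := i + t) (s := i) (by omega)
        simpa using this
      have hpow : i + t - i = t := by omega
      rw [hpow]
      have : ((j.choose (i+t) : ℝ)) * ((i+t).choose i) = (j.choose i : ℝ) * ((j-i).choose t) := by
        exact_mod_cast congrArg (Nat.cast : ℕ → ℝ) hc
      push_cast at this ⊢
      linear_combination ((-1:ℝ))^t * this
    have h5 : j + 1 - i = (j - i) + 1 := by omega
    rw [h1, Finset.range_eq_Ico, ← h3, h2, zero_add, h4, h5]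
    have h6 : ∑ t ∈ range ((j-i) + 1), ((-1 : ℝ) ^ t * (j.choose i) * ((j-i).choose t))
        = (j.choose i : ℝ) * ∑ t ∈ range ((j-i) + 1), ((-1 : ℝ) ^ t * ((j-i).choose t)) := by
      rw [Finset.mul_sum]; apply Finset.sum_congr rfl; intro t _; ring
    rw [h6, alt_sum_choose_real]
    rcases eq_or_lt_of_le hij with rfl | hlt
    · simp
    · rw [if_neg (by omega), if_neg (by omega), mul_zero]



lemma newton (m : ℕ) (hm : 0 < m) (n : ℕ) :
    (Polynomial.X : Polynomial ℝ) ^ n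
      = ∑ k ∈ range (n + 1), Polynomial.C (whitney2 m n k) * pfall m k := by
  have hmR : (0:ℝ) < m := by exact_mod_cast hm
  set D : Polynomial ℝ :=
    X ^ n - ∑ k ∈ range (n + 1), Polynomial.C (whitney2 m n k) * pfall m k with hD
  have hdeg : D.natDegree < n + 1 := by
    have h1 : (X ^ n : Polynomial ℝ).natDegree ≤ n := by simp
    have h2 : (∑ k ∈ range (n + 1), Polynomial.C (whitney2 m n k) * pfall m k).natDegree ≤ n := by
      refine Polynomial.natDegree_sum_le_of_forall_le _ _ ?_
      intro k hk
      refine le_trans (natDegree_C_mul_le _ _) ?_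
      rw [pfall_natDegree]
      exact Nat.lt_succ_iff.mp (Finset.mem_range.mp hk)
    rw [hD]
    have := (Polynomial.natDegree_sub_le_iff_left (p := (X^n : Polynomial ℝ)) h2).mpr h1
    omega
  have hzero : D = 0 := by
    refine Polynomial.eq_zero_of_natDegree_lt_card_of_eval_eq_zero D
      (f := fun j : Fin (n+1) => (m : ℝ) * j + 1) ?_ ?_ (by simpa using hdeg)
    · intro a b hab
      simp only at hab
      have h1 : ((a : ℕ) : ℝ) = ((b : ℕ) : ℝ) := mul_left_cancel₀ hmR.ne' (by linarith)
      exact Fin.ext (by exact_mod_cast h1)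
    · intro j
      have hj : (j : ℕ) ≤ n := Nat.lt_succ_iff.mp j.isLt
      simp only [hD, eval_sub, eval_pow, eval_X, eval_finset_sum, eval_mul, eval_C]
      rw [sub_eq_zero]
      have hev : ∀ k, whitney2 m n k * (pfall m k).eval ((m:ℝ) * (j:ℕ) + 1)
          = ((j:ℕ).choose k : ℝ) *
            ∑ i ∈ range (k + 1), (-1 : ℝ) ^ (k - i) * (k.choose i) * ((m : ℝ) * i + 1) ^ n := by
        intro k
        rw [pfall_eval, whitney2]
        have hne : ((m:ℝ) ^ k * k.factorial) ≠ 0 := by positivity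
        field_simp
      calc ((m:ℝ) * (j:ℕ) + 1) ^ n
          = ∑ k ∈ range (n+1), ((j:ℕ).choose k : ℝ) *
              ∑ i ∈ range (k + 1), (-1 : ℝ) ^ (k - i) * (k.choose i) * ((m : ℝ) * i + 1) ^ n := ?_
        _ = ∑ k ∈ range (n+1), whitney2 m n k * (pfall m k).eval ((m:ℝ) * (j:ℕ) + 1) := by
              exact Finset.sum_congr rfl fun k _ => (hev k).symm
      rw [eq_comm]
      -- use delta sum after swapping
      have swap : ∑ k ∈ range (n+1), ((j:ℕ).choose k : ℝ) *
            ∑ i ∈ range (k + 1), (-1 : ℝ) ^ (k - i) * (k.choose i) * ((m : ℝ) * i + 1) ^ n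
          = ∑ i ∈ range (n+1), (((m : ℝ) * i + 1) ^ n) *
            ∑ k ∈ range (n+1), (-1 : ℝ) ^ (k - i) * ((j:ℕ).choose k) * (k.choose i) := by
        have expand : ∀ k ∈ range (n+1), ((j:ℕ).choose k : ℝ) *
              ∑ i ∈ range (k + 1), (-1 : ℝ) ^ (k - i) * (k.choose i) * ((m : ℝ) * i + 1) ^ n
            = ∑ i ∈ range (n+1),
              (-1 : ℝ) ^ (k - i) * ((j:ℕ).choose k) * (k.choose i) * ((m : ℝ) * i + 1) ^ n := by
          intro k hk
          rw [Finset.mul_sum]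
          rw [← Finset.sum_subset (Finset.range_subset_range.mpr
            (Nat.succ_le_succ (Nat.lt_succ_iff.mp (Finset.mem_range.mp hk))))]
          · exact Finset.sum_congr rfl fun i _ => by ring
          · intro i _ hi
            have : k < i := by simpa using hi
            rw [Nat.choose_eq_zero_of_lt this]
            push_cast; ring
        rw [Finset.sum_congr rfl expand, Finset.sum_comm]
        exact Finset.sum_congr rfl fun i _ => by rw [Finset.mul_sum]; exact Finset.sum_congr rfl fun k _ => by ring
      rw [swap]
      have : ∀ i ∈ range (n+1), (((m : ℝ) * i + 1) ^ n) *
            ∑ k ∈ range (n+1), (-1 : ℝ) ^ (k - i) * ((j:ℕ).choose k) * (k.choose i)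
          = if i = (j:ℕ) then ((m : ℝ) * i + 1) ^ n else 0 := by
        intro i _
        rw [delta_sum n (j:ℕ) i hj]
        split_ifs <;> simp
      rw [Finset.sum_congr rfl this, Finset.sum_ite_eq' (range (n+1)) (j:ℕ)]
      rw [if_pos (Finset.mem_range.mpr (Nat.lt_succ_of_le hj))]
  have h0 : (X:Polynomial ℝ)^n - ∑ k ∈ range (n + 1), Polynomial.C (whitney2 m n k) * pfall m k = 0 := by
    rw [← hD]; exact hzero
  exact sub_eq_zero.mp h0

lemma whitney2_diag (m : ℕ) (hm : 0 < m) (n : ℕ) : whitney2 m n n = 1 := by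
  have h := congrArg (fun p : Polynomial ℝ => p.coeff n) (newton m hm n)
  simp only [Polynomial.coeff_X_pow, if_pos rfl,
    Polynomial.finset_sum_coeff, Polynomial.coeff_C_mul] at h
  rw [Finset.sum_range_succ] at h
  have hlow : ∀ k ∈ range n, whitney2 m n k * (pfall m k).coeff n = 0 := by
    intro k hk
    rw [Polynomial.coeff_eq_zero_of_natDegree_lt
      (by rw [pfall_natDegree]; exact Finset.mem_range.mp hk), mul_zero]
  rw [Finset.sum_eq_zero hlow, zero_add] at h
  have hmon : (pfall m n).coeff n = 1 := by
    have := (pfall_monic m n).coeff_natDegree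
    rwa [pfall_natDegree] at this
  rw [hmon, mul_one] at h
  · exact h.symm

noncomputable def df (l : ℕ) : ℕ → ℝ
  | 0 => 1
  | (n+1) => df l n * ((l : ℝ) - n)

lemma df_eq_zero {l n : ℕ} (h : l < n) : df l n = 0 := by
  induction n with
  | zero => omega
  | succ n ih =>
      rcases Nat.lt_or_ge l n with h' | h'
      · rw [df, ih h', zero_mul]
      · have : l = n := by omega
        subst this
        rw [df, sub_self, mul_zero]

lemma df_shift (l n : ℕ) : df (l+1) (n+1) = ((l:ℝ)+1) * df l n := by
  induction n with
  | zero => simp [df]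
  | succ n ih =>
      rw [df, ih, df]
      push_cast
      ring


lemma L_pfall (m : ℕ) (hm : 0 < m) (x : ℝ) (L : Polynomial ℝ →ₗ[ℝ] ℝ)
    (hL : ∀ n : ℕ, L (Polynomial.X ^ n) = tannyDowling m n x) (l : ℕ) :
    L (pfall m l) = l.factorial * x ^ l := by
  induction l using Nat.strong_induction_on with
  | _ l ih =>
    have h1 := hL l
    rw [newton m hm l, map_sum] at h1
    have h2 : ∀ k, L (Polynomial.C (whitney2 m l k) * pfall m k)
        = whitney2 m l k * L (pfall m k) := by
      intro k
      rw [← Polynomial.smul_eq_C_mul, map_smul, smul_eq_mul]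
    simp only [h2] at h1
    rw [Finset.sum_range_succ, whitney2_diag m hm l, one_mul] at h1
    rw [tannyDowling, Finset.sum_range_succ, whitney2_diag m hm l] at h1
    have h3 : ∀ k ∈ range l, whitney2 m l k * L (pfall m k)
        = (k.factorial : ℝ) * whitney2 m l k * x ^ k := by
      intro k hk
      rw [ih k (Finset.mem_range.mp hk)]
      ring
    rw [Finset.sum_congr rfl h3] at h1
    linarith [h1]

lemma pfall_mul_X_sub (m l : ℕ) (c : ℝ) :
    pfall m l * (X - Polynomial.C c)
      = pfall m (l+1) + Polynomial.C ((m:ℝ)*l + 1 - c) * pfall m l := by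
  have hC : Polynomial.C ((m:ℝ)*l + 1 - c)
      = Polynomial.C ((m:ℝ)*l + 1) - Polynomial.C c := by rw [map_sub]
  rw [pfall_succ, hC]
  ring

lemma L_C_mul (L : Polynomial ℝ →ₗ[ℝ] ℝ) (c : ℝ) (p : Polynomial ℝ) :
    L (Polynomial.C c * p) = c * L p := by
  rw [← Polynomial.smul_eq_C_mul, map_smul, smul_eq_mul]

lemma Tform (m : ℕ) (hm : 0 < m) (x : ℝ) (L : Polynomial ℝ →ₗ[ℝ] ℝ)
    (hL : ∀ n : ℕ, L (Polynomial.X ^ n) = tannyDowling m n x) (n : ℕ) :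
    ∀ l, L (pfall m l * tannyDowlingOP m x n)
      = l.factorial * df l n * x ^ l * (x + m) ^ n := by
  induction n using Nat.twoStepInduction with
  | zero =>
      intro l
      show L (pfall m l * 1) = _
      rw [mul_one, L_pfall m hm x L hL l]
      simp [df]
  | one =>
      intro l
      show L (pfall m l * (X - Polynomial.C (1 + x))) = _
      rw [pfall_mul_X_sub, map_add, L_C_mul, L_pfall m hm x L hL (l+1),
        L_pfall m hm x L hL l]
      have hdf : df l 1 = (l : ℝ) := by simp [df]
      rw [hdf]
      push_cast [Nat.factorial_succ]
      ring
  | more n ih2 ih1 =>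
      intro l
      show L (pfall m l *
        ((X - Polynomial.C (1 + (2 * ((n : ℝ) + 2) - 1) * x + ((n : ℝ) + 1) * m)) *
          tannyDowlingOP m x (n + 1) -
         Polynomial.C (((n : ℝ) + 1) ^ 2 * x * (x + m)) * tannyDowlingOP m x n)) = _
      have hsplit : pfall m l *
          ((X - Polynomial.C (1 + (2 * ((n : ℝ) + 2) - 1) * x + ((n : ℝ) + 1) * m)) *
            tannyDowlingOP m x (n + 1) -
           Polynomial.C (((n : ℝ) + 1) ^ 2 * x * (x + m)) * tannyDowlingOP m x n)
          = pfall m (l+1) * tannyDowlingOP m x (n+1)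
            + Polynomial.C ((m:ℝ)*l + 1 - (1 + (2 * ((n : ℝ) + 2) - 1) * x + ((n : ℝ) + 1) * m))
                * (pfall m l * tannyDowlingOP m x (n+1))
            - Polynomial.C (((n : ℝ) + 1) ^ 2 * x * (x + m))
                * (pfall m l * tannyDowlingOP m x n) := by
        have := pfall_mul_X_sub m l (1 + (2 * ((n : ℝ) + 2) - 1) * x + ((n : ℝ) + 1) * m)
        calc pfall m l * _ = (pfall m l * (X - Polynomial.C (1 + (2 * ((n : ℝ) + 2) - 1) * x + ((n : ℝ) + 1) * m))) * tannyDowlingOP m x (n+1)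
              - Polynomial.C (((n : ℝ) + 1) ^ 2 * x * (x + m)) * (pfall m l * tannyDowlingOP m x n) := by ring
          _ = _ := by rw [this]; ring
      rw [hsplit, map_sub, map_add, L_C_mul, L_C_mul, ih1 (l+1), ih1 l, ih2 l]
      have d1 : df l (n+1) = df l n * ((l:ℝ) - n) := rfl
      have d2 : df l (n+2) = df l (n+1) * ((l:ℝ) - ((n:ℕ)+1 : ℕ)) := rfl
      have d3 : df (l+1) (n+1) = ((l:ℝ)+1) * df l n := df_shift l n
      rw [d2, d1, d3]
      push_cast [Nat.factorial_succ]
      ring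

lemma lowdeg (m : ℕ) (hm : 0 < m) (x : ℝ) (L : Polynomial ℝ →ₗ[ℝ] ℝ)
    (hL : ∀ n : ℕ, L (Polynomial.X ^ n) = tannyDowling m n x) :
    ∀ d j, d < j → ∀ q : Polynomial ℝ, q.natDegree ≤ d →
      L (q * tannyDowlingOP m x j) = 0 := by
  intro d
  induction d with
  | zero =>
      intro j hj q hq
      rw [Polynomial.eq_C_of_natDegree_le_zero hq, L_C_mul]
      have h0 : L (pfall m 0 * tannyDowlingOP m x j) = 0 := by
        rw [Tform m hm x L hL j 0, df_eq_zero hj]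
        ring
      rw [pfall_zero, one_mul] at h0
      rw [h0, mul_zero]
  | succ d ih =>
      intro j hj q hq
      set c := q.coeff (d+1) with hc
      set q' := q - Polynomial.C c * pfall m (d+1) with hq'
      have hdeg : q'.natDegree ≤ d := by
        rw [Polynomial.natDegree_le_iff_coeff_eq_zero]
        intro N hN
        rw [hq', Polynomial.coeff_sub, Polynomial.coeff_C_mul]
        rcases eq_or_lt_of_le (Nat.succ_le_of_lt hN) with hNd | hNd
        · have hmon : (pfall m (d+1)).coeff (d+1) = 1 := by
            have := (pfall_monic m (d+1)).coeff_natDegree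
            rwa [pfall_natDegree] at this
          rw [← hNd, hmon, mul_one, sub_self]
        · have h1 : q.coeff N = 0 :=
            Polynomial.coeff_eq_zero_of_natDegree_lt (lt_of_le_of_lt hq hNd)
          have h2 : (pfall m (d+1)).coeff N = 0 :=
            Polynomial.coeff_eq_zero_of_natDegree_lt (by rw [pfall_natDegree]; omega)
          rw [h1, h2, mul_zero, sub_self]
      have hsplit : q * tannyDowlingOP m x j
          = q' * tannyDowlingOP m x j
            + Polynomial.C c * (pfall m (d+1) * tannyDowlingOP m x j) := by
        rw [hq']; ring
      rw [hsplit, map_add, L_C_mul, ih j (by omega) q' hdeg,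
        Tform m hm x L hL j (d+1), df_eq_zero hj]
      ring

lemma tdOP_natDegree_le (m : ℕ) (x : ℝ) : ∀ n, (tannyDowlingOP m x n).natDegree ≤ n := by
  intro n
  induction n using Nat.twoStepInduction with
  | zero => show (1 : Polynomial ℝ).natDegree ≤ 0; simp
  | one =>
      show (X - Polynomial.C (1+x) : Polynomial ℝ).natDegree ≤ 1
      exact (Polynomial.natDegree_X_sub_C _).le
  | more n ih2 ih1 =>
      show ((X - Polynomial.C (1 + (2 * ((n : ℝ) + 2) - 1) * x + ((n : ℝ) + 1) * m)) *
          tannyDowlingOP m x (n + 1) -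
        Polynomial.C (((n : ℝ) + 1) ^ 2 * x * (x + m)) * tannyDowlingOP m x n).natDegree ≤ n + 2
      refine le_trans (Polynomial.natDegree_sub_le _ _) ?_
      rw [max_le_iff]
      constructor
      · refine le_trans (Polynomial.natDegree_mul_le) ?_
        have : (X - Polynomial.C (1 + (2 * ((n : ℝ) + 2) - 1) * x + ((n : ℝ) + 1) * m)).natDegree = 1 :=
          Polynomial.natDegree_X_sub_C _
        omega
      · refine le_trans (Polynomial.natDegree_mul_le) ?_
        have := Polynomial.natDegree_C (((n : ℝ) + 1) ^ 2 * x * (x + m))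
        omega

theorem tannyDowling_moments_aux (m : ℕ) (hm : 0 < m) (x : ℝ)
    (L : Polynomial ℝ →ₗ[ℝ] ℝ)
    (hL : ∀ n : ℕ, L (Polynomial.X ^ n) = tannyDowling m n x) :
    ∀ i j : ℕ, i ≠ j → L (tannyDowlingOP m x i * tannyDowlingOP m x j) = 0 := by
  intro i j hij
  rcases lt_or_gt_of_ne hij with h | h
  · exact lowdeg m hm x L hL i j h _ (tdOP_natDegree_le m x i)
  · rw [mul_comm]
    exact lowdeg m hm x L hL j i h _ (tdOP_natDegree_le m x j)

/-- The Tanny–Dowling polynomials `𝓕_m(n,x)` are the moments of the orthogonal family `Q_n`. -/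
theorem tannyDowling_moments (m : ℕ) (hm : 0 < m) (x : ℝ)
    (L : Polynomial ℝ →ₗ[ℝ] ℝ)
    (hL : ∀ n : ℕ, L (Polynomial.X ^ n) = tannyDowling m n x) :
    ∀ i j : ℕ, i ≠ j → L (tannyDowlingOP m x i * tannyDowlingOP m x j) = 0 :=
  tannyDowling_moments_aux m hm x L hL
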